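/- arXiv:1706.03935 — 7 statements merged into one kernel-verified Lean document; each statement's English description precedes it below -/
import Mathlib

section
/- For every n and d with d ≤ n, and t = C·d²·log n for a sufficiently large absolute constant C, there exists a d-disjunct t×n Boolean matrix. -/
/-- A `t × n` Boolean matrix is `d`-disjunct if for every `d + 1` distinct
column indices `i, i₁, …, i_d` there is a row `j` with a `1` in column `i`
and `0` in columns `i₁, …, i_d`. -/
def Disjunct {t n : ℕ} (M : Fin t → Fin n → Bool) (d : ℕ) : Prop :=
  ∀ (i : Fin n) (S : Finset (Fin n)), S.card = d → i ∉ S →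
    ∃ j : Fin t, M j i = true ∧ ∀ k ∈ S, M j k = false


lemma card_goodrow (n d : ℕ) (i : Fin n) (S : Finset (Fin n))
    (hS : S.card = d) (hi : i ∉ S) :
    (Finset.univ.filter (fun r : Fin n → Fin (d+1) => r i = 0 ∧ ∀ k ∈ S, r k ≠ 0)).card
      = d^d * (d+1)^(n - d - 1) := by
  classical
  set T : Fin n → Finset (Fin (d+1)) :=
    fun k => if k = i then {0} else if k ∈ S then ({0}ᶜ) else Finset.univ with hT
  have hfilter : Finset.univ.filter (fun r : Fin n → Fin (d+1) => r i = 0 ∧ ∀ k ∈ S, r k ≠ 0)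
      = Fintype.piFinset T := by
    ext r
    simp only [Finset.mem_filter, Finset.mem_univ, true_and, Fintype.mem_piFinset, hT]
    constructor
    · rintro ⟨h1, h2⟩ k
      by_cases hki : k = i
      · subst hki; simp [h1]
      · by_cases hkS : k ∈ S
        · simp [hki, hkS, h2 k hkS]
        · simp [hki, hkS]
    · intro h
      constructor
      · have := h i; simpa using this
      · intro k hk
        have := h k
        have hki : k ≠ i := fun e => hi (e ▸ hk)
        simpa [hki, hk] using this
  rw [hfilter, Fintype.card_piFinset]
  have hcard : ∀ k, (T k).card = if k = i then 1 else if k ∈ S then d else d+1 := by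
    intro k
    by_cases hki : k = i
    · simp [hT, hki]
    · by_cases hkS : k ∈ S
      · simp [hT, hki, hkS, Finset.card_compl]
      · simp [hT, hki, hkS]
  calc ∏ k, (T k).card
      = (∏ k ∈ insert i S, (T k).card) * ∏ k ∈ (insert i S)ᶜ, (T k).card :=
        (Finset.prod_mul_prod_compl _ _).symm
    _ = d^d * (d+1)^(n - d - 1) := by
        have h1 : ∏ k ∈ insert i S, (T k).card = d^d := by
          rw [Finset.prod_insert hi, hcard i, if_pos rfl, one_mul]
          rw [Finset.prod_congr rfl (fun k hk => by
            have hki : k ≠ i := fun e => hi (e ▸ hk)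
            rw [hcard k, if_neg hki, if_pos hk])]
          rw [Finset.prod_const, hS]
        have h2 : ∏ k ∈ (insert i S)ᶜ, (T k).card = (d+1)^(n - d - 1) := by
          rw [Finset.prod_congr rfl (fun k hk => by
            simp only [Finset.mem_compl, Finset.mem_insert, not_or] at hk
            rw [hcard k, if_neg hk.1, if_neg hk.2])]
          rw [Finset.prod_const, Finset.card_compl, Finset.card_insert_of_notMem hi, hS]
          simp [Nat.sub_sub]
        rw [h1, h2]


lemma aux_pow (d : ℕ) (hd : 1 ≤ d) : (d+1)^d ≤ 4 * d^d := by
  have hd0 : (0:ℝ) < d := by exact_mod_cast hd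
  have h1 : ((d:ℝ)+1) ≤ d * Real.exp (1/d) := by
    calc ((d:ℝ)+1) = d * (1/d + 1) := by field_simp; ring
    _ ≤ d * Real.exp (1/d) := by nlinarith [Real.add_one_le_exp (1/(d:ℝ))]
  have h2 : ((d:ℝ)+1)^d ≤ (d:ℝ)^d * Real.exp 1 := by
    calc ((d:ℝ)+1)^d ≤ ((d:ℝ) * Real.exp (1/d))^d := by
          apply pow_le_pow_left₀ (by positivity) h1
    _ = (d:ℝ)^d * (Real.exp (1/d))^d := mul_pow ..
    _ = (d:ℝ)^d * Real.exp (d * (1/d)) := by rw [Real.exp_nat_mul]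
    _ = (d:ℝ)^d * Real.exp 1 := by rw [mul_one_div, div_self (ne_of_gt hd0)]
  have h3 : Real.exp 1 ≤ 4 := by have := Real.exp_one_lt_d9; linarith
  have : (((d+1)^d : ℕ) : ℝ) ≤ ((4 * d^d : ℕ) : ℝ) := by
    push_cast
    nlinarith [pow_nonneg hd0.le d]
  exact_mod_cast this

lemma key_ineq (n d : ℕ) (hd : 1 ≤ d) (hdn : d ≤ n) :
    n^(d+1) * ((d+1)^n - d^d*(d+1)^(n-d-1))^(100*d^2*(Nat.log 2 n + 1))
      < ((d+1)^n)^(100*d^2*(Nat.log 2 n + 1)) := by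
  set L : ℕ := Nat.log 2 n + 1 with hL
  set t : ℕ := 100*d^2*L with ht
  -- nat facts
  have hGA : d^d*(d+1)^(n-d-1) ≤ (d+1)^n := by
    calc d^d*(d+1)^(n-d-1) ≤ (d+1)^d * (d+1)^(n-d-1) :=
          Nat.mul_le_mul_right _ (Nat.pow_le_pow_left (Nat.le_succ d) d)
    _ = (d+1)^(d + (n-d-1)) := (pow_add _ _ _).symm
    _ ≤ (d+1)^n := Nat.pow_le_pow_right (Nat.succ_le_succ (Nat.zero_le d)) (by omega)
  have hAm : (d+1)^n ≤ 4*(d+1)*(d^d*(d+1)^(n-d-1)) := by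
    calc (d+1)^n ≤ (d+1)^((d+1) + (n-d-1)) :=
          Nat.pow_le_pow_right (by omega) (by omega)
    _ = (d+1) * (d+1)^d * (d+1)^(n-d-1) := by ring
    _ ≤ (d+1) * (4 * d^d) * (d+1)^(n-d-1) := by
          exact Nat.mul_le_mul_right _ (Nat.mul_le_mul_left _ (aux_pow d hd))
    _ = 4*(d+1)*(d^d*(d+1)^(n-d-1)) := by ring
  -- real setup
  set a : ℝ := ((d:ℝ)+1)^n with ha
  set g : ℝ := (d:ℝ)^d * ((d:ℝ)+1)^(n-d-1) with hg
  have hd1 : (1:ℝ) ≤ d := by exact_mod_cast hd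
  have ha_pos : 0 < a := by positivity
  have hg_pos : 0 < g := by positivity
  have hga : a ≤ 4*((d:ℝ)+1)*g := by
    have h' : (((d+1)^n : ℕ):ℝ) ≤ ((4*(d+1)*(d^d*(d+1)^(n-d-1)) : ℕ):ℝ) := by
      exact_mod_cast hAm
    rw [ha, hg]; push_cast at h' ⊢; linarith
  have hgl : g ≤ a := by
    have : ((d^d*(d+1)^(n-d-1) : ℕ):ℝ) ≤ (((d+1)^n : ℕ):ℝ) := by exact_mod_cast hGA
    push_cast at this; rw [ha, hg]; push_cast; linarith
  set m : ℝ := 4*((d:ℝ)+1) with hm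
  have hm_pos : (0:ℝ) < m := by positivity
  have hm1 : (1:ℝ) ≤ m := by rw [hm]; nlinarith
  have h1m : 0 ≤ 1 - 1/m := by
    have : 1/m ≤ 1 := by rw [div_le_one hm_pos]; linarith
    linarith
  -- step 1
  have hstep1 : (a - g)^t ≤ a^t * (1 - 1/m)^t := by
    rw [← mul_pow]
    apply pow_le_pow_left₀ (by linarith)
    have : a/m ≤ g := by rw [div_le_iff₀ hm_pos]; nlinarith
    have : a * (1 - 1/m) = a - a/m := by field_simp
    linarith [this]
  -- step 2
  have hstep2 : (1 - 1/m)^t ≤ Real.exp (-(t/m)) := by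
    have h0 : 1 - 1/m ≤ Real.exp (-(1/m)) := by
      have := Real.add_one_le_exp (-(1/m)); linarith
    calc (1 - 1/m)^t ≤ (Real.exp (-(1/m)))^t := pow_le_pow_left₀ h1m h0 t
    _ = Real.exp (t * (-(1/m))) := (Real.exp_nat_mul _ t).symm
    _ = Real.exp (-(t/m)) := by ring_nf
  -- step 3
  have hstep3 : ((n:ℝ))^(d+1) < Real.exp (t/m) := by
    have hn2 : n < 2^L := Nat.lt_pow_succ_log_self (by norm_num) n
    have hnat : n^(d+1) < 2^(L*(d+1)) := by
      rw [pow_mul]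
      exact Nat.pow_lt_pow_left hn2 (Nat.succ_ne_zero d)
    have hr1 : ((n:ℝ))^(d+1) < (2:ℝ)^(L*(d+1)) := by exact_mod_cast hnat
    have hr2 : (2:ℝ)^(L*(d+1)) ≤ Real.exp ((L*(d+1) : ℕ)) := by
      calc (2:ℝ)^(L*(d+1)) ≤ (Real.exp 1)^(L*(d+1)) := by
            apply pow_le_pow_left₀ (by norm_num)
            have := Real.exp_one_gt_d9; linarith
      _ = Real.exp ((L*(d+1):ℕ) * 1) := (Real.exp_nat_mul 1 _).symm
      _ = Real.exp ((L*(d+1):ℕ)) := by rw [mul_one]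
    have hr3 : ((L*(d+1):ℕ):ℝ) ≤ t/m := by
      rw [le_div_iff₀ hm_pos, ht, hm, hL]
      push_cast
      have hLpos : (1:ℝ) ≤ (Nat.log 2 n : ℝ) + 1 := le_add_of_nonneg_left (Nat.cast_nonneg _)
      have h2d : ((d:ℝ)+1)^2 ≤ 4*(d:ℝ)^2 := by nlinarith
      have hmul := mul_le_mul_of_nonneg_left h2d
        (by positivity : (0:ℝ) ≤ 4*((Nat.log 2 n:ℝ)+1))
      nlinarith [hmul, hLpos, sq_nonneg ((d:ℝ))]
    calc ((n:ℝ))^(d+1) < (2:ℝ)^(L*(d+1)) := hr1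
    _ ≤ Real.exp ((L*(d+1):ℕ)) := hr2
    _ ≤ Real.exp (t/m) := Real.exp_le_exp.mpr hr3
  -- combine
  have hfinal : ((n:ℝ))^(d+1) * (a - g)^t < a^t := by
    have hN_pos : (0:ℝ) < ((n:ℝ))^(d+1) := by
      have : (1:ℕ) ≤ n := le_trans hd hdn
      have : (1:ℝ) ≤ n := by exact_mod_cast this
      positivity
    calc ((n:ℝ))^(d+1) * (a - g)^t
        ≤ ((n:ℝ))^(d+1) * (a^t * (1 - 1/m)^t) := by
          apply mul_le_mul_of_nonneg_left hstep1 hN_pos.le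
    _ ≤ ((n:ℝ))^(d+1) * (a^t * Real.exp (-(t/m))) := by
          apply mul_le_mul_of_nonneg_left _ hN_pos.le
          exact mul_le_mul_of_nonneg_left hstep2 (pow_nonneg ha_pos.le t)
    _ = a^t * (((n:ℝ))^(d+1) * Real.exp (-(t/m))) := by ring
    _ < a^t * 1 := by
          apply mul_lt_mul_of_pos_left _ (pow_pos ha_pos t)
          calc ((n:ℝ))^(d+1) * Real.exp (-(t/m))
              < Real.exp (t/m) * Real.exp (-(t/m)) :=
                mul_lt_mul_of_pos_right hstep3 (Real.exp_pos _)
          _ = 1 := by rw [← Real.exp_add]; simp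
    _ = a^t := mul_one _
  -- cast back
  have hcast : ((n^(d+1) * ((d+1)^n - d^d*(d+1)^(n-d-1))^t : ℕ):ℝ)
      < ((((d+1)^n)^t : ℕ):ℝ) := by
    push_cast [Nat.cast_sub hGA]
    convert hfinal using 3 <;> push_cast <;> ring
  exact_mod_cast hcast


lemma card_forall {β : Type*} [Fintype β] (t : ℕ) (P : β → Prop) [DecidablePred P] :
    (Finset.univ.filter (fun M : Fin t → β => ∀ j, P (M j))).card
      = ((Finset.univ.filter P).card)^t := by
  classical
  rw [← Fintype.card_subtype, ← Fintype.card_subtype]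
  rw [Fintype.card_congr (Equiv.subtypePiEquivPi (p := fun _ : Fin t => P))]
  simp [Fintype.card_pi]




/-- For a sufficiently large absolute constant `C`, for every `n` and `d ≤ n`
there exists a `d`-disjunct Boolean matrix with `C·d²·log n` rows. -/
theorem stmt1 :
    ∃ C : ℕ, 0 < C ∧ ∀ n d : ℕ, 1 ≤ d → d ≤ n →
      ∃ M : Fin (C * d ^ 2 * (Nat.log 2 n + 1)) → Fin n → Bool, Disjunct M d := by
  classical
  refine ⟨100, by norm_num, fun n d hd hdn => ?_⟩
  set t : ℕ := 100 * d ^ 2 * (Nat.log 2 n + 1) with htdef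
  have hex : ∃ M : Fin t → Fin n → Fin (d+1),
      ∀ (i : Fin n) (S : Finset (Fin n)), S.card = d → i ∉ S →
        ∃ j, M j i = 0 ∧ ∀ k ∈ S, M j k ≠ 0 := by
    by_contra hcon
    push_neg at hcon
    set Pairs : Finset (Fin n × Finset (Fin n)) :=
      Finset.univ.filter (fun p => p.2.card = d ∧ p.1 ∉ p.2) with hPairs
    set Bad : (Fin n × Finset (Fin n)) → Finset (Fin t → Fin n → Fin (d+1)) :=
      fun p => Finset.univ.filter
        (fun M => ∀ j, ¬(M j p.1 = 0 ∧ ∀ k ∈ p.2, M j k ≠ 0)) with hBad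
    have hcover : (Finset.univ : Finset (Fin t → Fin n → Fin (d+1)))
        ⊆ Pairs.biUnion Bad := by
      intro M _
      obtain ⟨i, S, h1, h2, h3⟩ := hcon M
      apply Finset.mem_biUnion.mpr
      refine ⟨(i, S), Finset.mem_filter.mpr ⟨Finset.mem_univ _, h1, h2⟩,
        Finset.mem_filter.mpr ⟨Finset.mem_univ _, ?_⟩⟩
      intro j hj
      obtain ⟨k, hk, hk0⟩ := h3 j hj.1
      exact hj.2 k hk hk0
    have hbadcard : ∀ p ∈ Pairs,
        (Bad p).card = ((d+1)^n - d^d*(d+1)^(n-d-1))^t := by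
      intro p hp
      obtain ⟨-, h1, h2⟩ := Finset.mem_filter.mp hp
      rw [hBad]
      rw [card_forall t (fun r : Fin n → Fin (d+1) => ¬(r p.1 = 0 ∧ ∀ k ∈ p.2, r k ≠ 0))]
      congr 1
      rw [Finset.filter_not, Finset.card_sdiff_of_subset (Finset.filter_subset _ _),
        card_goodrow n d p.1 p.2 h1 h2]
      congr 1
      simp [Fintype.card_fun]
    have hpairscard : Pairs.card ≤ n^(d+1) := by
      have hsub : Pairs ⊆ Finset.univ ×ˢ Finset.powersetCard d Finset.univ := by
        intro p hp
        obtain ⟨-, h1, -⟩ := Finset.mem_filter.mp hp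
        exact Finset.mem_product.mpr ⟨Finset.mem_univ _,
          Finset.mem_powersetCard.mpr ⟨Finset.subset_univ _, h1⟩⟩
      calc Pairs.card ≤ _ := Finset.card_le_card hsub
      _ = n * Nat.choose n d := by
          rw [Finset.card_product, Finset.card_powersetCard]
          simp
      _ ≤ n * n^d := Nat.mul_le_mul_left _ (Nat.choose_le_pow n d)
      _ = n^(d+1) := by ring
    have hcount : ((d+1)^n)^t ≤ n^(d+1) * ((d+1)^n - d^d*(d+1)^(n-d-1))^t := by
      calc ((d+1)^n)^t = Fintype.card (Fin t → Fin n → Fin (d+1)) := by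
            simp [Fintype.card_fun]
      _ = (Finset.univ : Finset (Fin t → Fin n → Fin (d+1))).card := by
            rw [Finset.card_univ]
      _ ≤ (Pairs.biUnion Bad).card := Finset.card_le_card hcover
      _ ≤ ∑ p ∈ Pairs, (Bad p).card := Finset.card_biUnion_le
      _ = ∑ p ∈ Pairs, ((d+1)^n - d^d*(d+1)^(n-d-1))^t := Finset.sum_congr rfl hbadcard
      _ = Pairs.card * ((d+1)^n - d^d*(d+1)^(n-d-1))^t := by rw [Finset.sum_const, smul_eq_mul]
      _ ≤ n^(d+1) * ((d+1)^n - d^d*(d+1)^(n-d-1))^t :=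
            Nat.mul_le_mul_right _ hpairscard
    exact absurd hcount (Nat.not_le.mpr (key_ineq n d hd hdn))
  obtain ⟨M, hM⟩ := hex
  refine ⟨fun j k => decide (M j k = 0), ?_⟩
  intro i S hS hiS
  obtain ⟨j, hj1, hj2⟩ := hM i S hS hiS
  exact ⟨j, by simp [hj1], fun k hk => by simp [hj2 k hk]⟩
end

section
/- Every set of assignments that the teacher can force an adaptive deterministic learning algorithm for DT_d to query (when all answers are 0) must be an (n,d)-universal set; consequently, any deterministic exact learning algorithm for depth-d decision trees from membership queries must ask at least as many queries as the minimum size of an (n,d)-universal set. -/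
/-- Decision trees over `n` Boolean variables. -/
inductive DecTree (n : ℕ) where
  | leaf : Bool → DecTree n
  | node : Fin n → DecTree n → DecTree n → DecTree n

namespace DecTree

def eval {n : ℕ} : DecTree n → (Fin n → Bool) → Bool
  | leaf b, _ => b
  | node i t0 t1, x => if x i then t1.eval x else t0.eval x

def depth {n : ℕ} : DecTree n → ℕ
  | leaf _ => 0
  | node _ t0 t1 => max t0.depth t1.depth + 1

end DecTree

/-- `A ⊆ {0,1}ⁿ` is an `(n,d)`-universal set. -/
def UniversalSet {n : ℕ} (A : Set (Fin n → Bool)) (d : ℕ) : Prop :=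
  ∀ I : Finset (Fin n), I.card = d → ∀ b : Fin n → Bool,
    ∃ a ∈ A, ∀ i ∈ I, a i = b i

/-- The transcript of answers when an adaptive deterministic algorithm with
next-query map `query` interacts for `k` rounds with a teacher holding `f`. -/
def transcript {X : Type*} (query : List Bool → X) (f : X → Bool) : ℕ → List Bool
  | 0 => []
  | k + 1 => transcript query f k ++ [f (query (transcript query f k))]

/-- Conjunction decision tree: evaluates to `true` iff `x i = b i` for all `i` in the list. -/
def conjTree {n : ℕ} (b : Fin n → Bool) : List (Fin n) → DecTree n
  | [] => DecTree.leaf true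
  | i :: l => if b i then DecTree.node i (DecTree.leaf false) (conjTree b l)
              else DecTree.node i (conjTree b l) (DecTree.leaf false)

lemma conjTree_eval {n : ℕ} (b : Fin n → Bool) (l : List (Fin n)) (x : Fin n → Bool) :
    (conjTree b l).eval x = l.all (fun i => x i == b i) := by
  induction l with
  | nil => simp [conjTree, DecTree.eval]
  | cons i l ih =>
    cases hb : b i <;> cases hx : x i <;>
      simp [conjTree, DecTree.eval, hb, hx, ih]

lemma conjTree_depth {n : ℕ} (b : Fin n → Bool) (l : List (Fin n)) :
    (conjTree b l).depth ≤ l.length := by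
  induction l with
  | nil => simp [conjTree, DecTree.depth]
  | cons i l ih =>
    by_cases hb : b i <;> simp [conjTree, hb, DecTree.depth] <;> omega

lemma transcript_congr {X : Type*} (query : List Bool → X) (f g : X → Bool) (q : ℕ)
    (h : ∀ k < q, f (query (transcript query g k)) = g (query (transcript query g k))) :
    transcript query f q = transcript query g q := by
  induction q with
  | zero => rfl
  | succ k ih =>
    have hk : transcript query f k = transcript query g k :=
      ih (fun j hj => h j (Nat.lt_trans hj (Nat.lt_succ_self k)))
    simp [transcript, hk, h k (Nat.lt_succ_self k)]

/-- Any adaptive deterministic exact learner for depth-`d` decision trees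
making `q` membership queries, when run against the all-zero teacher, asks a
set of queries that forms an `(n,d)`-universal set of size at most `q`;
consequently `q` is at least the minimum size of an `(n,d)`-universal set. -/
theorem stmt4 {n d q : ℕ} (hd : d ≤ n)
    (query : List Bool → (Fin n → Bool))
    (output : List Bool → ((Fin n → Bool) → Bool))
    (hcorrect : ∀ T : DecTree n, T.depth ≤ d →
      output (transcript query T.eval q) = fun x => T.eval x) :
    let U : Finset (Fin n → Bool) :=
      ((List.range q).map fun k =>
        query (transcript query (fun _ => false) k)).toFinset
    UniversalSet (U : Set (Fin n → Bool)) d ∧ U.card ≤ q ∧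
      ∀ m : ℕ, (∀ V : Finset (Fin n → Bool), UniversalSet (V : Set (Fin n → Bool)) d → m ≤ V.card) →
        m ≤ q := by
  intro U
  have hUmem : ∀ a, a ∈ U ↔ ∃ k < q, query (transcript query (fun _ => false) k) = a := by
    intro a
    simp [U, List.mem_toFinset]
  have huniv : UniversalSet (U : Set (Fin n → Bool)) d := by
    intro I hI b
    by_contra hcon
    push_neg at hcon
    set T := conjTree b I.toList with hT
    have hdepth : T.depth ≤ d := by
      have := conjTree_depth b I.toList
      simpa [hI] using this
    have hfalse : ∀ a ∈ U, T.eval a = false := by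
      intro a ha
      obtain ⟨i, hiI, hine⟩ := hcon a (by simpa using ha)
      rw [hT, conjTree_eval]
      rw [List.all_eq_false]
      exact ⟨i, by simpa using hiI, by simpa using hine⟩
    have htr : transcript query T.eval q = transcript query (fun _ => false) q := by
      apply transcript_congr
      intro k hk
      apply hfalse
      rw [hUmem]
      exact ⟨k, hk, rfl⟩
    have h1 := hcorrect T hdepth
    rw [htr] at h1
    have h2 := hcorrect (DecTree.leaf false) (by simp [DecTree.depth])
    have hlf : (DecTree.leaf false : DecTree n).eval = fun _ => false := by
      funext x; rfl
    rw [hlf] at h2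
    have : T.eval b = false := by
      have := congrFun (h2.symm.trans h1) b
      simpa [DecTree.eval] using this.symm
    rw [hT, conjTree_eval] at this
    simp at this
  have hcard : U.card ≤ q := by
    calc U.card ≤ ((List.range q).map fun k =>
        query (transcript query (fun _ => false) k)).length := List.toFinset_card_le _
    _ = q := by simp
  exact ⟨huniv, hcard, fun m hm => (hm U huniv).trans hcard⟩
end

section
/- For any finite class C of Boolean functions on a finite domain X, ETD(C) ≤ TD(2^X, C) ≤ ETD(C) + 1. -/
variable {X : Type*} [Fintype X] [DecidableEq X]

/-- `T` is a specifying set for `h` with respect to `C`: at most one function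
in `C` agrees with `h` on all of `T`. -/
def IsSpecSet (C : Finset (X → Bool)) (h : X → Bool) (T : Finset X) : Prop :=
  (C.filter (fun f => ∀ x ∈ T, f x = h x)).card ≤ 1

/-- The minimum size of a specifying set for `h` with respect to `C`. -/
noncomputable def specNum (C : Finset (X → Bool)) (h : X → Bool) : ℕ :=
  sInf {k | ∃ T : Finset X, T.card = k ∧ IsSpecSet C h T}

/-- The extended teaching dimension of `C`. -/
noncomputable def ETD (C : Finset (X → Bool)) : ℕ :=
  sSup {k | ∃ h : X → Bool, specNum C h = k}

/-- `A` is an identity test set for `h` with respect to `C`. -/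
def IsITSet (C : Finset (X → Bool)) (h : X → Bool) (A : Finset X) : Prop :=
  ∀ f ∈ C, f ≠ h → ∃ a ∈ A, f a ≠ h a

/-- The minimum size of an identity test set for `h` with respect to `C`. -/
noncomputable def itNum (C : Finset (X → Bool)) (h : X → Bool) : ℕ :=
  sInf {k | ∃ A : Finset X, A.card = k ∧ IsITSet C h A}

/-- `TD(2^X, C)`: the maximum over all Boolean `h` on `X` of the minimum size
identity test set for `h` with respect to `C`. -/
noncomputable def TDfull (C : Finset (X → Bool)) : ℕ :=
  sSup {k | ∃ h : X → Bool, itNum C h = k}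

lemma specSet_nonempty (C : Finset (X → Bool)) (h : X → Bool) :
    {k | ∃ T : Finset X, T.card = k ∧ IsSpecSet C h T}.Nonempty := by
  refine ⟨(Finset.univ : Finset X).card, Finset.univ, rfl, ?_⟩
  apply Finset.card_le_one.2
  intro f hf g hg
  simp only [Finset.mem_filter, Finset.mem_univ, forall_true_left] at hf hg
  funext x
  rw [hf.2 x, hg.2 x]

lemma itSet_nonempty (C : Finset (X → Bool)) (h : X → Bool) :
    {k | ∃ A : Finset X, A.card = k ∧ IsITSet C h A}.Nonempty := by
  refine ⟨(Finset.univ : Finset X).card, Finset.univ, rfl, ?_⟩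
  intro f _ hfh
  obtain ⟨x, hx⟩ := Function.ne_iff.1 hfh
  exact ⟨x, Finset.mem_univ x, hx⟩

lemma specNum_le_itNum (C : Finset (X → Bool)) (h : X → Bool) :
    specNum C h ≤ itNum C h := by
  obtain ⟨A, hA, hIT⟩ := Nat.sInf_mem (itSet_nonempty C h)
  refine le_trans (Nat.sInf_le ⟨A, rfl, ?_⟩) hA.le
  apply Finset.card_le_one.2
  intro f hf g hg
  simp only [Finset.mem_filter] at hf hg
  have key : ∀ p : X → Bool, p ∈ C → (∀ x ∈ A, p x = h x) → p = h := by
    intro p hp hagree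
    by_contra hne
    obtain ⟨a, ha, hpa⟩ := hIT p hp hne
    exact hpa (hagree a ha)
  rw [key f hf.1 hf.2, key g hg.1 hg.2]

lemma itNum_le_specNum_succ (C : Finset (X → Bool)) (h : X → Bool) :
    itNum C h ≤ specNum C h + 1 := by
  obtain ⟨T, hT, hSpec⟩ := Nat.sInf_mem (specSet_nonempty C h)
  by_cases hex : ∃ f ∈ C.filter (fun f => ∀ x ∈ T, f x = h x), f ≠ h
  · obtain ⟨f₀, hf₀, hf₀ne⟩ := hex
    obtain ⟨x, hx⟩ := Function.ne_iff.1 hf₀ne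
    have hIT : IsITSet C h (insert x T) := by
      intro f hf hfne
      by_cases hagree : ∀ a ∈ T, f a = h a
      · have : f = f₀ := Finset.card_le_one.1 hSpec f
          (Finset.mem_filter.2 ⟨hf, hagree⟩) f₀ hf₀
        exact ⟨x, Finset.mem_insert_self x T, this ▸ hx⟩
      · push_neg at hagree
        obtain ⟨a, ha, hfa⟩ := hagree
        exact ⟨a, Finset.mem_insert_of_mem ha, hfa⟩
    calc itNum C h ≤ (insert x T).card := Nat.sInf_le ⟨insert x T, rfl, hIT⟩
      _ ≤ T.card + 1 := Finset.card_insert_le x T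
      _ = specNum C h + 1 := by rw [hT]; rfl
  · push_neg at hex
    have hIT : IsITSet C h T := by
      intro f hf hfne
      by_contra hno
      push_neg at hno
      exact hfne (hex f (Finset.mem_filter.2 ⟨hf, hno⟩))
    calc itNum C h ≤ T.card := Nat.sInf_le ⟨T, rfl, hIT⟩
      _ = specNum C h := hT
      _ ≤ specNum C h + 1 := Nat.le_succ _

lemma itNum_le_card (C : Finset (X → Bool)) (h : X → Bool) :
    itNum C h ≤ Fintype.card X := by
  obtain ⟨k, A, hA, hIT⟩ := itSet_nonempty C h
  exact le_trans (Nat.sInf_le ⟨A, rfl, hIT⟩) ((Finset.card_le_univ A).trans_eq Finset.card_univ)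

/-- `ETD(C) ≤ TD(2^X, C) ≤ ETD(C) + 1`. -/
theorem stmt7 (C : Finset (X → Bool)) :
    ETD C ≤ TDfull C ∧ TDfull C ≤ ETD C + 1 := by
  have hbdd : BddAbove {k | ∃ h : X → Bool, itNum C h = k} := by
    refine ⟨Fintype.card X, fun k hk => ?_⟩
    obtain ⟨h, rfl⟩ := hk
    exact itNum_le_card C h
  constructor
  · refine csSup_le ?_ ?_
    · exact ⟨specNum C (fun _ => false), ⟨fun _ => false, rfl⟩⟩
    rintro k ⟨h, rfl⟩
    exact le_trans (specNum_le_itNum C h) (le_csSup hbdd ⟨h, rfl⟩)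
  · refine csSup_le ?_ ?_
    · exact ⟨itNum C (fun _ => false), ⟨fun _ => false, rfl⟩⟩
    rintro k ⟨h, rfl⟩
    have hbdd2 : BddAbove {k | ∃ h : X → Bool, specNum C h = k} := by
      refine ⟨Fintype.card X, fun k hk => ?_⟩
      obtain ⟨h, rfl⟩ := hk
      exact le_trans (specNum_le_itNum C h) (itNum_le_card C h)
    exact le_trans (itNum_le_specNum_succ C h)
      (Nat.add_le_add_right (le_csSup hbdd2 ⟨h, rfl⟩) 1)
end

section
/- For every n and r+s ≤ n, any equivalent test set A ⊆ {0,1}^n for the class of s-term r-MDNF formulas is both an (n,(s,r-1))-cover free family and an (n,(s-1,r))-cover free family. -/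
/-- Evaluation of a monotone DNF, given as the finite set of its monomials
(each a finite set of variables). -/
def evalMDNF {n : ℕ} (F : Finset (Finset (Fin n))) (a : Fin n → Bool) : Bool :=
  decide (∃ T ∈ F, ∀ i ∈ T, a i = true)

/-- `A ⊆ {0,1}ⁿ` is an `(n,(s,r))`-cover free family: for every `s + r`
distinct indices split into a set `S` of `s` indices and a set `J` of `r`
indices, some `a ∈ A` is `0` on `S` and `1` on `J`. -/
def CFF (n : ℕ) (s r : ℕ) (A : Set (Fin n → Bool)) : Prop :=
  ∀ S J : Finset (Fin n), S.card = s → J.card = r → Disjoint S J →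
    ∃ a ∈ A, (∀ i ∈ S, a i = false) ∧ (∀ i ∈ J, a i = true)

/-- `A` is an equivalent test set for `s`-term `r`-MDNF: any two non-equivalent
monotone DNFs with at most `s` terms of size at most `r` differ on `A`. -/
def IsETS {n : ℕ} (A : Set (Fin n → Bool)) (s r : ℕ) : Prop :=
  ∀ F₁ F₂ : Finset (Finset (Fin n)),
    F₁.card ≤ s → F₂.card ≤ s →
    (∀ T ∈ F₁, T.card ≤ r) → (∀ T ∈ F₂, T.card ≤ r) →
    (∃ x, evalMDNF F₁ x ≠ evalMDNF F₂ x) →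
    ∃ a ∈ A, evalMDNF F₁ a ≠ evalMDNF F₂ a

lemma evalMDNF_eq_true {n : ℕ} (F : Finset (Finset (Fin n))) (a : Fin n → Bool) :
    evalMDNF F a = true ↔ ∃ T ∈ F, ∀ i ∈ T, a i = true := by
  simp [evalMDNF]

/-- Any equivalent test set for `s`-term `r`-MDNF is both an
`(n,(s,r-1))`-CFF and an `(n,(s-1,r))`-CFF. -/
theorem stmt11 {n s r : ℕ} (hrs : r + s ≤ n) (hr : 1 ≤ r) (hs : 1 ≤ s)
    (A : Set (Fin n → Bool)) (hA : IsETS A s r) :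
    CFF n s (r - 1) A ∧ CFF n (s - 1) r A := by
  constructor
  · intro S J hS hJ hdisj
    have hSJ : ∀ i ∈ S, i ∉ J := fun i hi hij =>
      (Finset.disjoint_left.mp hdisj) hi hij
    obtain ⟨a, ha, hne⟩ := hA {J} (S.image fun i => insert i J)
      (by simp; omega)
      (le_trans Finset.card_image_le (le_of_eq hS))
      (by intro T hT; simp at hT; subst hT; omega)
      (by
        intro T hT
        simp only [Finset.mem_image] at hT
        obtain ⟨i, hi, rfl⟩ := hT
        calc (insert i J).card ≤ J.card + 1 := Finset.card_insert_le _ _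
          _ ≤ r := by omega)
      ⟨(fun i => decide (i ∈ J)), by
        intro h
        simp only [evalMDNF, decide_eq_decide] at h
        have h1 : ∃ T ∈ ({J} : Finset (Finset (Fin n))), ∀ i ∈ T,
            decide (i ∈ J) = true := ⟨J, by simp⟩
        obtain ⟨T, hT, hall⟩ := h.mp h1
        simp only [Finset.mem_image] at hT
        obtain ⟨i, hi, rfl⟩ := hT
        have := hall i (Finset.mem_insert_self i J)
        simp at this
        exact hSJ i hi this⟩
    -- now derive the values of a
    have h21 : evalMDNF (S.image fun i => insert i J) a = true →
        evalMDNF {J} a = true := by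
      simp only [evalMDNF_eq_true]
      rintro ⟨T, hT, hall⟩
      simp only [Finset.mem_image] at hT
      obtain ⟨i, hi, rfl⟩ := hT
      exact ⟨J, by simp, fun j hj => hall j (Finset.mem_insert_of_mem hj)⟩
    have h1 : evalMDNF {J} a = true := by
      by_contra h1
      have h2 : evalMDNF (S.image fun i => insert i J) a = false := by
        cases h : evalMDNF (S.image fun i => insert i J) a
        · rfl
        · exact absurd (h21 h) h1
      simp only [Bool.not_eq_true] at h1
      exact hne (h1.trans h2.symm)
    have h2 : evalMDNF (S.image fun i => insert i J) a = false := by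
      cases h : evalMDNF (S.image fun i => insert i J) a
      · rfl
      · exact absurd (h1.trans h.symm) hne
    have hJtrue : ∀ i ∈ J, a i = true := by
      rw [evalMDNF_eq_true] at h1
      obtain ⟨T, hT, hall⟩ := h1
      simp at hT; subst hT; exact hall
    refine ⟨a, ha, ?_, hJtrue⟩
    intro i hi
    by_contra hfi
    simp only [Bool.not_eq_false] at hfi
    have : evalMDNF (S.image fun i => insert i J) a = true := by
      rw [evalMDNF_eq_true]
      refine ⟨insert i J, Finset.mem_image_of_mem _ hi, ?_⟩
      intro j hj
      rcases Finset.mem_insert.mp hj with rfl | hj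
      · exact hfi
      · exact hJtrue j hj
    rw [this] at h2; exact Bool.noConfusion h2
  · intro S J hS hJ hdisj
    have hSJ : ∀ i ∈ S, i ∉ J := fun i hi hij =>
      (Finset.disjoint_left.mp hdisj) hi hij
    set F₁ : Finset (Finset (Fin n)) := S.image fun i => ({i} : Finset (Fin n)) with hF₁
    set F₂ : Finset (Finset (Fin n)) := insert J F₁ with hF₂
    obtain ⟨a, ha, hne⟩ := hA F₁ F₂
      (le_trans Finset.card_image_le (by omega))
      (by
        have h1 : F₁.card ≤ s - 1 := le_trans Finset.card_image_le (le_of_eq hS)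
        have h2 : F₂.card ≤ F₁.card + 1 := Finset.card_insert_le J F₁
        omega)
      (by intro T hT; simp only [hF₁, Finset.mem_image] at hT
          obtain ⟨i, hi, rfl⟩ := hT; simpa using hr)
      (by intro T hT
          rcases Finset.mem_insert.mp hT with rfl | hT
          · omega
          · simp only [hF₁, Finset.mem_image] at hT
            obtain ⟨i, hi, rfl⟩ := hT; simpa using hr)
      ⟨(fun i => decide (i ∈ J)), by
        intro h
        simp only [evalMDNF, decide_eq_decide] at h
        have h2 : ∃ T ∈ F₂, ∀ i ∈ T, decide (i ∈ J) = true :=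
          ⟨J, Finset.mem_insert_self _ _, by simp⟩
        obtain ⟨T, hT, hall⟩ := h.mpr h2
        simp only [hF₁, Finset.mem_image] at hT
        obtain ⟨i, hi, rfl⟩ := hT
        have := hall i (Finset.mem_singleton_self i)
        simp at this
        exact hSJ i hi this⟩
    have h12 : evalMDNF F₁ a = true → evalMDNF F₂ a = true := by
      simp only [evalMDNF_eq_true]
      rintro ⟨T, hT, hall⟩
      exact ⟨T, Finset.mem_insert_of_mem hT, hall⟩
    have h2 : evalMDNF F₂ a = true := by
      by_contra h2
      have h1 : evalMDNF F₁ a = false := by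
        cases h : evalMDNF F₁ a
        · rfl
        · exact absurd (h12 h) h2
      simp only [Bool.not_eq_true] at h2
      exact hne (h1.trans h2.symm)
    have h1 : evalMDNF F₁ a = false := by
      cases h : evalMDNF F₁ a
      · rfl
      · exact absurd (h.trans h2.symm) hne
    have hSfalse : ∀ i ∈ S, a i = false := by
      intro i hi
      by_contra hfi
      simp only [Bool.not_eq_false] at hfi
      have : evalMDNF F₁ a = true := by
        rw [evalMDNF_eq_true]
        exact ⟨{i}, Finset.mem_image_of_mem _ hi, by simpa using hfi⟩
      rw [this] at h1; exact Bool.noConfusion h1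
    refine ⟨a, ha, hSfalse, ?_⟩
    rw [evalMDNF_eq_true] at h2
    obtain ⟨T, hT, hall⟩ := h2
    rcases Finset.mem_insert.mp hT with rfl | hT
    · exact hall
    · exfalso
      simp only [hF₁, Finset.mem_image] at hT
      obtain ⟨i, hi, rfl⟩ := hT
      have := hall i (Finset.mem_singleton_self i)
      rw [hSfalse i hi] at this
      exact Bool.false_ne_true this
end

section
/- Any (n,(s,r))-cover free family is an equivalent test set for the class of s-term r-MDNF formulas: for any two non-equivalent monotone DNFs f₁, f₂ each with at most s monomials of size at most r, there is an assignment a in the cover free family with f₁(a) ≠ f₂(a). -/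
theorem cff_key {n s r : ℕ} (hrs : s + r ≤ n)
    (A : Set (Fin n → Bool)) (hA : CFF n s r A)
    (F₁ F₂ : Finset (Finset (Fin n)))
    (h1 : F₂.card ≤ s) (h2 : ∀ T ∈ F₁, T.card ≤ r)
    (x : Fin n → Bool) (hx1 : evalMDNF F₁ x = true) (hx2 : evalMDNF F₂ x = false) :
    ∃ a ∈ A, evalMDNF F₁ a = true ∧ evalMDNF F₂ a = false := by
  simp only [evalMDNF, decide_eq_true_eq, decide_eq_false_iff_not] at hx1 hx2
  push_neg at hx2
  obtain ⟨T, hT, hTx⟩ := hx1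
  have pick : ∀ T' ∈ F₂, ∃ i ∈ T', i ∉ T := by
    intro T' hT'
    obtain ⟨i, hi, hxi⟩ := hx2 T' hT'
    exact ⟨i, hi, fun hiT => hxi (hTx i hiT)⟩
  choose f hf1 hf2 using pick
  set S₀ : Finset (Fin n) := F₂.attach.image (fun T' => f T'.1 T'.2) with hS₀def
  have hS₀card : S₀.card ≤ s :=
    le_trans (Finset.card_image_le.trans (by simp)) h1
  have hS₀T : Disjoint S₀ T := by
    rw [Finset.disjoint_left]
    intro i hi
    simp only [hS₀def, Finset.mem_image, Finset.mem_attach, true_and, Subtype.exists] at hi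
    obtain ⟨T', hT', rfl⟩ := hi
    exact hf2 T' hT'
  -- extend T to J of card r inside univ \ S₀
  have hTsub : T ⊆ Finset.univ \ S₀ := by
    intro i hi
    simp only [Finset.mem_sdiff, Finset.mem_univ, true_and]
    exact fun h => Finset.disjoint_left.mp hS₀T h hi
  have hcard1 : r ≤ (Finset.univ \ S₀ : Finset (Fin n)).card := by
    rw [Finset.card_sdiff_of_subset (Finset.subset_univ _)]
    simp only [Finset.card_univ, Fintype.card_fin]
    omega
  obtain ⟨J, hTJ, hJsub, hJcard⟩ :=
    Finset.exists_subsuperset_card_eq hTsub (h2 T hT) hcard1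
  have hSJdisj : Disjoint S₀ J := by
    rw [Finset.disjoint_right]
    intro i hi
    exact (Finset.mem_sdiff.mp (hJsub hi)).2
  have hS₀sub : S₀ ⊆ Finset.univ \ J := by
    intro i hi
    simp only [Finset.mem_sdiff, Finset.mem_univ, true_and]
    exact fun h => Finset.disjoint_left.mp hSJdisj hi h
  have hcard2 : s ≤ (Finset.univ \ J : Finset (Fin n)).card := by
    rw [Finset.card_sdiff_of_subset (Finset.subset_univ _)]
    simp only [Finset.card_univ, Fintype.card_fin, hJcard]
    omega
  obtain ⟨S, hS₀S, hSsub, hScard⟩ :=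
    Finset.exists_subsuperset_card_eq hS₀sub hS₀card hcard2
  have hdisj : Disjoint S J := by
    rw [Finset.disjoint_left]
    intro i hiS hiJ
    exact (Finset.mem_sdiff.mp (hSsub hiS)).2 hiJ
  obtain ⟨a, haA, haS, haJ⟩ := hA S J hScard hJcard hdisj
  refine ⟨a, haA, ?_, ?_⟩
  · simp only [evalMDNF, decide_eq_true_eq]
    exact ⟨T, hT, fun i hi => haJ i (hTJ hi)⟩
  · simp only [evalMDNF, decide_eq_false_iff_not]
    push_neg
    intro T' hT'
    refine ⟨f T' hT', hf1 T' hT', ?_⟩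
    have : f T' hT' ∈ S₀ := by
      simp only [hS₀def, Finset.mem_image, Finset.mem_attach, true_and, Subtype.exists]
      exact ⟨T', hT', rfl⟩
    simp [haS _ (hS₀S this)]

/-- Any `(n,(s,r))`-cover free family is an equivalent test set for the class
of `s`-term `r`-MDNF formulas. -/
theorem stmt12 {n s r : ℕ} (hrs : s + r ≤ n)
    (A : Set (Fin n → Bool)) (hA : CFF n s r A) :
    ∀ F₁ F₂ : Finset (Finset (Fin n)),
      F₁.card ≤ s → F₂.card ≤ s →
      (∀ T ∈ F₁, T.card ≤ r) → (∀ T ∈ F₂, T.card ≤ r) →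
      (∃ x, evalMDNF F₁ x ≠ evalMDNF F₂ x) →
      ∃ a ∈ A, evalMDNF F₁ a ≠ evalMDNF F₂ a := by
  intro F₁ F₂ hc1 hc2 hr1 hr2 ⟨x, hx⟩
  rcases Bool.eq_false_or_eq_true (evalMDNF F₁ x) with h1 | h1 <;>
    rcases Bool.eq_false_or_eq_true (evalMDNF F₂ x) with h2 | h2
  · exact absurd (h1.trans h2.symm) hx
  · obtain ⟨a, haA, ha1, ha2⟩ := cff_key hrs A hA F₁ F₂ hc2 hr1 x h1 h2
    exact ⟨a, haA, by simp [ha1, ha2]⟩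
  · obtain ⟨a, haA, ha1, ha2⟩ := cff_key hrs A hA F₂ F₁ hc1 hr2 x h2 h1
    exact ⟨a, haA, by simp [ha1, ha2]⟩
  · exact absurd (h1.trans h2.symm) hx
end

section
/- Schwartz–Zippel: Let F be a field, f ∈ F[x_1,...,x_n] a nonzero polynomial of total degree at most d, and S ⊆ F a finite set. If y_1,...,y_n are chosen independently and uniformly at random from S, then Pr[f(y_1,...,y_n) ≠ 0] ≥ 1 − d/|S|. -/
open Finset MvPolynomial

/-- Schwartz–Zippel counting lemma over ℕ: the number of zeros of a nonzero
polynomial of total degree at most `d` in `Sⁿ`, multiplied by `|S|`, is at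
most `d·|S|ⁿ`. -/
lemma sz_nat {F : Type*} [Field F] [DecidableEq F] (S : Finset F) :
    ∀ (n d : ℕ) (f : MvPolynomial (Fin n) F), f ≠ 0 → f.totalDegree ≤ d →
    (Finset.univ.filter fun y : Fin n → ↥S =>
        MvPolynomial.eval (fun i => (y i : F)) f = 0).card * S.card ≤ d * S.card ^ n := by
  intro n
  induction n with
  | zero =>
      intro d f hf _
      obtain ⟨a, rfl⟩ := MvPolynomial.C_surjective (Fin 0) f
      have ha : a ≠ 0 := by simpa using hf
      have : (Finset.univ.filter fun y : Fin 0 → ↥S =>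
          MvPolynomial.eval (fun i => (y i : F)) (MvPolynomial.C a) = 0) = ∅ := by
        apply Finset.filter_false_of_mem
        intro y _
        simpa using ha
      simp [ha]
  | succ n IH =>
      intro d f hf hd
      set g := MvPolynomial.finSuccEquiv F n f with hgdef
      have hg : g ≠ 0 := by
        intro h
        apply hf
        have := (MvPolynomial.finSuccEquiv F n).injective
          (a₁ := f) (a₂ := 0) (by simpa [hgdef] using h)
        simpa using this
      set k := g.natDegree with hk
      set c := g.coeff k with hc
      have hc0 : c ≠ 0 := by
        rw [hc, hk, ← Polynomial.leadingCoeff]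
        exact Polynomial.leadingCoeff_ne_zero.mpr hg
      have hck : c.totalDegree + k ≤ d :=
        le_trans (MvPolynomial.totalDegree_coeff_finSuccEquiv_add_le f k hc0) hd
      have hkd : k ≤ d := le_trans (Nat.le_add_left _ _) hck
      have hcd : c.totalDegree ≤ d - k := by omega
      have hT := IH (d - k) c hc0 hcd
      set T := Finset.univ.filter fun t : Fin n → ↥S =>
        MvPolynomial.eval (fun i => (t i : F)) c = 0 with hTdef
      set Z := Finset.univ.filter fun y : Fin (n+1) → ↥S =>
        MvPolynomial.eval (fun i => (y i : F)) f = 0 with hZdef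
      -- fiber decomposition along the tail
      have hZsum : Z.card = ∑ t : Fin n → ↥S,
          (Z.filter fun y => Fin.tail y = t).card :=
        Finset.card_eq_sum_card_fiberwise (fun y _ => Finset.mem_univ _)
      -- per-tail bound
      have hfiber : ∀ t : Fin n → ↥S,
          (Z.filter fun y => Fin.tail y = t).card ≤
            (if MvPolynomial.eval (fun i => (t i : F)) c = 0 then S.card else k) := by
        intro t
        have hA : (Z.filter fun y => Fin.tail y = t).card ≤
            (Finset.univ.filter fun a : ↥S =>
              MvPolynomial.eval (Fin.cons (a : F) (fun i => (t i : F))) f = 0).card := by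
          apply Finset.card_le_card_of_injOn (fun y => y 0)
          · intro y hy
            have hy : y ∈ Z.filter (fun y => Fin.tail y = t) := hy
            simp only [hZdef, Finset.mem_coe, Finset.mem_filter, Finset.mem_univ, true_and] at hy ⊢
            obtain ⟨hy1, hy2⟩ := hy
            have : Fin.cons ((y 0 : F)) (fun i => (t i : F)) =
                fun i => (y i : F) := by
              subst hy2
              ext i
              refine Fin.cases ?_ ?_ i <;> simp [Fin.tail]
            rw [this]
            exact hy1
          · intro y1 h1 y2 h2 h
            simp only [hZdef, Finset.mem_coe, Finset.mem_filter] at h1 h2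
            have := h1.2.trans h2.2.symm
            funext i
            refine Fin.cases ?_ ?_ i
            · exact h
            · intro j; exact congrFun this j
        by_cases hct : MvPolynomial.eval (fun i => (t i : F)) c = 0
        · rw [if_pos hct]
          refine hA.trans ?_
          refine le_trans (Finset.card_filter_le _ _) ?_
          simp [Fintype.card_coe]
        · rw [if_neg hct]
          refine hA.trans ?_
          set p := g.map (MvPolynomial.eval (fun i => (t i : F))) with hp
          have hpne : p ≠ 0 := by
            intro h
            apply hct
            have : p.coeff k = 0 := by rw [h]; simp
            simpa [hp, Polynomial.coeff_map, hc] using this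
          have hroot : ∀ a : ↥S,
              MvPolynomial.eval (Fin.cons (a : F) (fun i => (t i : F))) f = 0 →
              Polynomial.eval (a : F) p = 0 := by
            intro a ha
            rw [hp, hgdef, ← MvPolynomial.eval_eq_eval_mv_eval']
            exact ha
          calc (Finset.univ.filter fun a : ↥S =>
                MvPolynomial.eval (Fin.cons (a : F) (fun i => (t i : F))) f = 0).card
              ≤ p.roots.toFinset.card := by
                refine Finset.card_le_card_of_injOn (fun a => (a : F)) ?_ ?_
                · intro a ha
                  have ha : a ∈ Finset.univ.filter (fun a : ↥S =>
                    MvPolynomial.eval (Fin.cons (a : F) (fun i => (t i : F))) f = 0) := ha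
                  simp only [Finset.mem_filter, Finset.mem_univ, true_and] at ha
                  simp only [Finset.mem_coe, Multiset.mem_toFinset, Polynomial.mem_roots hpne,
                    Polynomial.IsRoot.def]
                  exact hroot a ha
                · intro a _ b _ h
                  exact Subtype.ext h
            _ ≤ Multiset.card p.roots := p.roots.toFinset_card_le
            _ ≤ p.natDegree := p.card_roots'
            _ ≤ k := Polynomial.natDegree_map_le
      -- summing up
      have hsum : Z.card ≤ T.card * S.card + S.card ^ n * k := by
        rw [hZsum]
        calc (∑ t : Fin n → ↥S, (Z.filter fun y => Fin.tail y = t).card)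
            ≤ ∑ t : Fin n → ↥S,
              (if MvPolynomial.eval (fun i => (t i : F)) c = 0 then S.card else k) :=
              Finset.sum_le_sum (fun t _ => hfiber t)
          _ = T.card * S.card + (Finset.univ.filter fun t : Fin n → ↥S =>
                ¬ MvPolynomial.eval (fun i => (t i : F)) c = 0).card * k := by
              rw [Finset.sum_ite, Finset.sum_const, Finset.sum_const, hTdef]
              simp [mul_comm, Finset.filter_not]
          _ ≤ T.card * S.card + S.card ^ n * k := by
              gcongr
              refine le_trans (Finset.card_filter_le _ _) ?_
              simp [Fintype.card_coe, Finset.card_univ]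
      calc Z.card * S.card ≤ (T.card * S.card + S.card ^ n * k) * S.card := by gcongr
        _ = (T.card * S.card) * S.card + k * S.card ^ (n+1) := by ring
        _ ≤ ((d - k) * S.card ^ n) * S.card + k * S.card ^ (n+1) := by gcongr
        _ = ((d - k) + k) * S.card ^ (n+1) := by ring
        _ = d * S.card ^ (n+1) := by rw [Nat.sub_add_cancel hkd]

/-- Schwartz–Zippel: if `f` is a nonzero polynomial of total degree at most
`d` over a field `F` and `S ⊆ F` is a finite nonempty set, then for
`y₁, …, yₙ` chosen independently and uniformly from `S`,
`Pr[f(y₁,…,yₙ) ≠ 0] ≥ 1 − d/|S|`; equivalently the number of tuples in `Sⁿ`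
on which `f` does not vanish is at least `(1 − d/|S|)·|S|ⁿ`. -/
theorem stmt14 {F : Type*} [Field F] [DecidableEq F] {n d : ℕ}
    (f : MvPolynomial (Fin n) F) (hf : f ≠ 0) (hd : f.totalDegree ≤ d)
    (S : Finset F) (hS : S.Nonempty) :
    (1 - (d : ℝ) / S.card) * (S.card : ℝ) ^ n ≤
      ((Finset.univ.filter fun y : Fin n → ↥S =>
        MvPolynomial.eval (fun i => (y i : F)) f ≠ 0).card : ℝ) := by
  have hs0 : 0 < S.card := Finset.card_pos.mpr hS
  have hsR : (0:ℝ) < (S.card : ℝ) := by exact_mod_cast hs0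
  set Z := Finset.univ.filter fun y : Fin n → ↥S =>
      MvPolynomial.eval (fun i => (y i : F)) f = 0 with hZdef
  have hnat : Z.card * S.card ≤ d * S.card ^ n := sz_nat S n d f hf hd
  have hcardfun : Fintype.card (Fin n → ↥S) = S.card ^ n := by
    simp [Fintype.card_coe]
  have hcompl : (Finset.univ.filter fun y : Fin n → ↥S =>
      MvPolynomial.eval (fun i => (y i : F)) f ≠ 0).card = S.card ^ n - Z.card := by
    rw [← hcardfun, hZdef]
    rw [Finset.filter_not, Finset.card_sdiff_of_subset (Finset.filter_subset _ _)]
    simp [Finset.card_univ]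
  have hZle : Z.card ≤ S.card ^ n := by
    refine le_trans (Finset.card_filter_le _ _) ?_
    simp [Finset.card_univ, Fintype.card_coe]
  rw [hcompl]
  rw [Nat.cast_sub hZle]
  have h1 : (Z.card : ℝ) ≤ (d : ℝ) / S.card * (S.card : ℝ) ^ n := by
    rw [div_mul_eq_mul_div, le_div_iff₀ hsR]
    exact_mod_cast hnat
  push_cast
  nlinarith [h1]
end

section
/- For f : {0,1}^n → ℝ with Fourier coefficients f̂ and any prefix α ∈ {0,1}^r, the quantity F_α = E_{y,z ∈ {0,1}^r, x ∈ {0,1}^{n−r}}[f(yx)·f(zx)·χ_α(y)·χ_α(z)] equals Σ_{x ∈ {0,1}^{n−r}} f̂(αx)², where αx denotes the concatenation of α and x. In particular F_α = F_{α0} + F_{α1}. -/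
/-- The character `χ_α(y) = ∏ᵢ (−1)^{αᵢyᵢ}` on the Boolean cube. -/
def chi {r : ℕ} (α y : Fin r → Bool) : ℝ :=
  ∏ i : Fin r, if α i && y i then (-1 : ℝ) else 1

/-- `F_α = E_{y,z ∈ {0,1}^r, x ∈ {0,1}^m}[f(yx)·f(zx)·χ_α(y)·χ_α(z)]`, where
`f : {0,1}^{r+m} → ℝ` is written as a function of the `r`-bit prefix and the
`m`-bit suffix. -/
noncomputable def Fcal {r m : ℕ} (f : (Fin r → Bool) → (Fin m → Bool) → ℝ)
    (α : Fin r → Bool) : ℝ :=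
  (∑ y : Fin r → Bool, ∑ z : Fin r → Bool, ∑ x : Fin m → Bool,
      f y x * f z x * chi α y * chi α z) / (2 ^ r * 2 ^ r * 2 ^ m)

/-- The Fourier coefficient `f̂(αβ)` of `f : {0,1}^{r+m} → ℝ` at the
concatenation of `α ∈ {0,1}^r` and `β ∈ {0,1}^m`. -/
noncomputable def fhat2 {r m : ℕ} (f : (Fin r → Bool) → (Fin m → Bool) → ℝ)
    (α : Fin r → Bool) (β : Fin m → Bool) : ℝ :=
  (∑ y : Fin r → Bool, ∑ x : Fin m → Bool, f y x * chi α y * chi β x) /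
    (2 ^ r * 2 ^ m)

/-- Viewing `f : {0,1}^{r+1+m} → ℝ` with prefix length `r+1` instead of `r`:
move the first suffix bit into the prefix. -/
def extendPrefix {r m : ℕ} (f : (Fin r → Bool) → (Fin (m + 1) → Bool) → ℝ) :
    (Fin (r + 1) → Bool) → (Fin m → Bool) → ℝ :=
  fun y x => f (fun i => y i.castSucc) (Fin.cons (y (Fin.last r)) x)

lemma chi_orth {m : ℕ} (x x' : Fin m → Bool) :
    ∑ β : Fin m → Bool, chi β x * chi β x' = if x = x' then (2:ℝ)^m else 0 := by
  have : ∀ β : Fin m → Bool, chi β x * chi β x' =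
      ∏ i, ((if β i && x i then (-1:ℝ) else 1) * (if β i && x' i then (-1:ℝ) else 1)) := by
    intro β; rw [chi, chi, ← Finset.prod_mul_distrib]
  simp only [this]
  rw [← Fintype.prod_sum (fun i b => (if b && x i then (-1:ℝ) else 1) * (if b && x' i then (-1:ℝ) else 1))]
  have : ∀ i : Fin m, (∑ b : Bool, (if b && x i then (-1:ℝ) else 1) * (if b && x' i then (-1:ℝ) else 1))
      = if x i = x' i then 2 else 0 := by
    intro i; cases hx : x i <;> cases hx' : x' i <;> norm_num [Fintype.sum_bool]
  simp only [this]
  by_cases h : x = x'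
  · subst h; simp
  · rw [if_neg h]
    obtain ⟨i, hi⟩ := Function.ne_iff.mp h
    exact Finset.prod_eq_zero (Finset.mem_univ i) (by simp [hi])

lemma part1 (r m : ℕ) (f : (Fin r → Bool) → (Fin m → Bool) → ℝ) (α : Fin r → Bool) :
    Fcal f α = ∑ β : Fin m → Bool, (fhat2 f α β) ^ 2 := by
  have key : ∀ β : Fin m → Bool,
      (∑ y : Fin r → Bool, ∑ x : Fin m → Bool, f y x * chi α y * chi β x) ^ 2 =
      ∑ y : Fin r → Bool, ∑ z : Fin r → Bool, ∑ x : Fin m → Bool, ∑ x' : Fin m → Bool,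
        (f y x * f z x' * chi α y * chi α z) * (chi β x * chi β x') := by
    intro β
    rw [sq, Finset.sum_mul_sum Finset.univ Finset.univ
      (fun y => ∑ x : Fin m → Bool, f y x * chi α y * chi β x)
      (fun z => ∑ x' : Fin m → Bool, f z x' * chi α z * chi β x')]
    refine Finset.sum_congr rfl fun y _ => ?_
    refine Finset.sum_congr rfl fun z _ => ?_
    rw [Finset.sum_mul_sum Finset.univ Finset.univ
      (fun x => f y x * chi α y * chi β x)
      (fun x' => f z x' * chi α z * chi β x')]
    exact Finset.sum_congr rfl fun x _ => Finset.sum_congr rfl fun x' _ => by ring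
  have swap : ∑ β : Fin m → Bool,
      ∑ y : Fin r → Bool, ∑ z : Fin r → Bool, ∑ x : Fin m → Bool, ∑ x' : Fin m → Bool,
        (f y x * f z x' * chi α y * chi α z) * (chi β x * chi β x')
      = (∑ y : Fin r → Bool, ∑ z : Fin r → Bool, ∑ x : Fin m → Bool,
          f y x * f z x * chi α y * chi α z) * 2 ^ m := by
    rw [Finset.sum_comm]
    rw [Finset.sum_mul]
    refine Finset.sum_congr rfl fun y _ => ?_
    rw [Finset.sum_comm, Finset.sum_mul]
    refine Finset.sum_congr rfl fun z _ => ?_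
    rw [Finset.sum_comm, Finset.sum_mul]
    refine Finset.sum_congr rfl fun x _ => ?_
    rw [Finset.sum_comm]
    have : ∀ x' : Fin m → Bool, (∑ β : Fin m → Bool,
        (f y x * f z x' * chi α y * chi α z) * (chi β x * chi β x'))
        = (f y x * f z x' * chi α y * chi α z) * (if x = x' then (2:ℝ)^m else 0) := by
      intro x'; rw [← Finset.mul_sum, chi_orth]
    simp only [this, mul_ite, mul_zero]
    rw [Finset.sum_ite_eq Finset.univ x (fun x' => f y x * f z x' * chi α y * chi α z * 2 ^ m)]
    simp
  simp only [Fcal, fhat2, div_pow, key, ← Finset.sum_div, swap]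
  have h2m : ((2:ℝ)^m) ≠ 0 := by positivity
  field_simp

lemma sum_snoc {r : ℕ} (g : (Fin (r+1) → Bool) → ℝ) :
    ∑ y : Fin (r+1) → Bool, g y = ∑ y : Fin r → Bool, ∑ c : Bool, g (Fin.snoc y c) := by
  rw [← (Fin.snocEquiv (fun _ => Bool)).sum_comp g, Fintype.sum_prod_type, Finset.sum_comm]
  rfl

lemma sum_cons {m : ℕ} (g : (Fin (m+1) → Bool) → ℝ) :
    ∑ x : Fin (m+1) → Bool, g x = ∑ c : Bool, ∑ x : Fin m → Bool, g (Fin.cons c x) := by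
  rw [← (Fin.consEquiv (fun _ => Bool)).sum_comp g, Fintype.sum_prod_type]
  rfl

lemma chi_snoc {r : ℕ} (α y : Fin r → Bool) (b c : Bool) :
    chi (Fin.snoc α b) (Fin.snoc y c) = chi α y * (if b && c then (-1:ℝ) else 1) := by
  rw [chi, chi, Fin.prod_univ_castSucc]
  simp [Fin.snoc_castSucc, Fin.snoc_last]

lemma chi_cons {m : ℕ} (β x : Fin m → Bool) (b c : Bool) :
    chi (Fin.cons b β) (Fin.cons c x) = (if b && c then (-1:ℝ) else 1) * chi β x := by
  rw [chi, chi, Fin.prod_univ_succ]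
  simp [Fin.cons_succ, Fin.cons_zero]

lemma fhat2_extend {r m : ℕ} (f : (Fin r → Bool) → (Fin (m + 1) → Bool) → ℝ)
    (α : Fin r → Bool) (b : Bool) (β : Fin m → Bool) :
    fhat2 (extendPrefix f) (Fin.snoc α b) β = fhat2 f α (Fin.cons b β) := by
  unfold fhat2
  rw [sum_snoc (fun y => ∑ x : Fin m → Bool,
    extendPrefix f y x * chi (Fin.snoc α b) y * chi β x)]
  have hL : ∀ (y : Fin r → Bool) (c : Bool) (x : Fin m → Bool),
      extendPrefix f (Fin.snoc y c) x = f y (Fin.cons c x) := by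
    intro y c x
    unfold extendPrefix
    simp [Fin.snoc_castSucc, Fin.snoc_last]
  conv_rhs => rw [Finset.sum_congr rfl (fun y _ => sum_cons
    (fun x' => f y x' * chi α y * chi (Fin.cons b β) x'))]
  have : ∀ (y : Fin r → Bool) (c : Bool) (x : Fin m → Bool),
      extendPrefix f (Fin.snoc y c) x * chi (Fin.snoc α b) (Fin.snoc y c) * chi β x
      = f y (Fin.cons c x) * chi α y * chi (Fin.cons b β) (Fin.cons c x) := by
    intro y c x
    rw [hL, chi_snoc, chi_cons]; ring
  simp only [this]
  rw [show ((2:ℝ)^(r+1) * 2^m) = 2^r * 2^(m+1) by ring]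

lemma part2 (r m : ℕ) (f : (Fin r → Bool) → (Fin (m + 1) → Bool) → ℝ)
    (α : Fin r → Bool) :
    Fcal f α = Fcal (extendPrefix f) (Fin.snoc α false) +
      Fcal (extendPrefix f) (Fin.snoc α true) := by
  rw [part1, part1, part1]
  simp only [fhat2_extend]
  rw [sum_cons (fun β => fhat2 f α β ^ 2), Fintype.sum_bool, add_comm]

/-- `F_α = ∑_{x ∈ {0,1}^{n−r}} f̂(αx)²`; in particular
`F_α = F_{α0} + F_{α1}`. -/
theorem stmt17 :
    (∀ (r m : ℕ) (f : (Fin r → Bool) → (Fin m → Bool) → ℝ) (α : Fin r → Bool),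
      Fcal f α = ∑ β : Fin m → Bool, (fhat2 f α β) ^ 2) ∧
    (∀ (r m : ℕ) (f : (Fin r → Bool) → (Fin (m + 1) → Bool) → ℝ)
        (α : Fin r → Bool),
      Fcal f α = Fcal (extendPrefix f) (Fin.snoc α false) +
        Fcal (extendPrefix f) (Fin.snoc α true)) := by
  exact ⟨part1, part2⟩
end
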